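/- Let α : Y → Ȳ and β : X̄ → X be homotopy equivalences, and let f₁, …, f_n : X → Y and f'₁, …, f'_n : X̄ → Ȳ be continuous maps with α ∘ f_i ∘ β ≃ f'_i for every i = 1, …, n. Then D(f₁, …, f_n) = D(f'₁, …, f'_n). -/

import Mathlib

/-- The (higher) homotopic distance of a family of continuous maps `f i : X → Y`:
the least `l` such that `X` admits an open cover by `l` open sets on each of which
all the maps restrict to pairwise homotopic maps (`∞` if no such cover exists). -/
noncomputable def homDist {X Y : Type*} [TopologicalSpace X] [TopologicalSpace Y]
    {k : ℕ} (f : Fin k → C(X, Y)) : ℕ∞ :=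
  sInf ((fun n : ℕ => (n : ℕ∞)) '' {n : ℕ | ∃ U : Fin n → Set X,
    (∀ j, IsOpen (U j)) ∧ (⋃ j, U j) = Set.univ ∧
    ∀ j i i', ((f i).restrict (U j)).Homotopic ((f i').restrict (U j))})

/-- Homotopic distance of two maps. -/
noncomputable def homDist2 {X Y : Type*} [TopologicalSpace X] [TopologicalSpace Y]
    (f g : C(X, Y)) : ℕ∞ :=
  homDist ![f, g]

universe u

/-- A continuous map is a fibration if it has the homotopy lifting property with respect
to all spaces (in universe `u`). -/
def IsFibration {X Y : Type*} [TopologicalSpace X] [TopologicalSpace Y]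
    (f : C(X, Y)) : Prop :=
  ∀ (Z : Type u) [TopologicalSpace Z] (g : C(Z, X)) (G : C(Z × unitInterval, Y)),
    (∀ z, G (z, 0) = f (g z)) →
    ∃ G' : C(Z × unitInterval, X),
      (∀ p, f (G' p) = G p) ∧ ∀ z, G' (z, 0) = g z

/-- The Schwarz genus of a map `p : E → B`: the least number of open sets covering `B`
over each of which `p` admits a continuous local section. -/
noncomputable def secat {E B : Type*} [TopologicalSpace E] [TopologicalSpace B]
    (p : C(E, B)) : ℕ∞ :=
  sInf ((fun n : ℕ => (n : ℕ∞)) '' {n : ℕ | ∃ U : Fin n → Set B,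
    (∀ j, IsOpen (U j)) ∧ (⋃ j, U j) = Set.univ ∧
    ∀ j, ∃ s : C(U j, E), ∀ x : U j, p (s x) = (x : B)})

/-- The fibration `π_g : X^I → X × Y`, `β ↦ (β 0, g (β 1))`, associated to `g : X → Y`. -/
noncomputable def piMap {X Y : Type*} [TopologicalSpace X] [TopologicalSpace Y]
    (g : C(X, Y)) : C(C(unitInterval, X), X × Y) :=
  ⟨fun β => (β 0, g (β 1)),
    (continuous_eval_const 0).prodMk
      (g.continuous.comp (continuous_eval_const 1))⟩

/-- The topological complexity of a map `g : X → Y`, as the Schwarz genus of `π_g`. -/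
noncomputable def TCmap {X Y : Type*} [TopologicalSpace X] [TopologicalSpace Y]
    (g : C(X, Y)) : ℕ∞ :=
  secat (piMap g)

/-- Projection `pᵢ : Xⁿ → X` as a continuous map. -/
def projC {X : Type*} [TopologicalSpace X] {n : ℕ} (i : Fin n) : C((Fin n → X), X) :=
  ⟨fun x => x i, continuous_apply i⟩

lemma homDist_comp_le {X Y Xb Yb : Type*} [TopologicalSpace X] [TopologicalSpace Y]
    [TopologicalSpace Xb] [TopologicalSpace Yb] {n : ℕ}
    (α : C(Y, Yb)) (β : C(Xb, X)) (f : Fin n → C(X, Y)) :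
    homDist (fun i => (α.comp (f i)).comp β) ≤ homDist f := by
  apply sInf_le_sInf
  apply Set.image_mono
  rintro m ⟨U, hopen, hcov, hhom⟩
  refine ⟨fun j => β ⁻¹' U j, fun j => (hopen j).preimage β.continuous, ?_, ?_⟩
  · rw [← Set.preimage_iUnion, hcov, Set.preimage_univ]
  · intro j i i'
    set βr : C(β ⁻¹' U j, U j) :=
      ⟨fun x => ⟨β x, x.2⟩, Continuous.subtype_mk (β.continuous.comp continuous_subtype_val) _⟩
    have key : ∀ g : C(X, Y), ((α.comp g).comp β).restrict (β ⁻¹' U j)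
        = α.comp ((g.restrict (U j)).comp βr) := fun g => ContinuousMap.ext fun _ => rfl
    rw [key, key]
    exact ContinuousMap.Homotopic.comp (ContinuousMap.Homotopic.refl α)
      (ContinuousMap.Homotopic.comp (hhom j i i') (ContinuousMap.Homotopic.refl βr))

lemma homDist_congr {X Y : Type*} [TopologicalSpace X] [TopologicalSpace Y] {n : ℕ}
    (f g : Fin n → C(X, Y)) (h : ∀ i, (f i).Homotopic (g i)) :
    homDist f = homDist g := by
  have key : ∀ (U : Set X) (i : Fin n), ((f i).restrict U).Homotopic ((g i).restrict U) := by
    intro U i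
    have e : ∀ p : C(X, Y), p.restrict U =
        p.comp ⟨Subtype.val, continuous_subtype_val⟩ := fun p => ContinuousMap.ext fun _ => rfl
    rw [e, e]
    exact ContinuousMap.Homotopic.comp (h i) (ContinuousMap.Homotopic.refl _)
  unfold homDist
  congr 1
  apply congrArg
  ext m
  constructor
  · rintro ⟨U, ho, hc, hh⟩
    exact ⟨U, ho, hc, fun j i i' =>
      ((key _ _).symm.trans ((hh j i i').trans (key _ _)))⟩
  · rintro ⟨U, ho, hc, hh⟩
    exact ⟨U, ho, hc, fun j i i' =>
      ((key _ _).trans ((hh j i i').trans (key _ _).symm))⟩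

theorem homDist_eq_of_conjugate_homotopy_equiv {X Y Xb Yb : Type*} [TopologicalSpace X]
    [TopologicalSpace Y] [TopologicalSpace Xb] [TopologicalSpace Yb] {n : ℕ}
    (α : C(Y, Yb)) (β : C(Xb, X))
    (hα : ∃ α' : C(Yb, Y), (α.comp α').Homotopic (ContinuousMap.id Yb) ∧
      (α'.comp α).Homotopic (ContinuousMap.id Y))
    (hβ : ∃ β' : C(X, Xb), (β.comp β').Homotopic (ContinuousMap.id X) ∧
      (β'.comp β).Homotopic (ContinuousMap.id Xb))
    (f : Fin n → C(X, Y)) (f' : Fin n → C(Xb, Yb))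
    (h : ∀ i, ((α.comp (f i)).comp β).Homotopic (f' i)) :
    homDist f = homDist f' := by
  obtain ⟨α', hα1, hα2⟩ := hα
  obtain ⟨β', hβ1, hβ2⟩ := hβ
  apply le_antisymm
  · -- homDist f ≤ homDist f'
    have hfg : ∀ i, (f i).Homotopic ((α'.comp (f' i)).comp β') := by
      intro i
      have h1 : ((α'.comp ((α.comp (f i)).comp β)).comp β').Homotopic
          ((α'.comp (f' i)).comp β') :=
        ContinuousMap.Homotopic.comp (ContinuousMap.Homotopic.comp (ContinuousMap.Homotopic.refl α') (h i)) (ContinuousMap.Homotopic.refl β')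
      have e : (α'.comp ((α.comp (f i)).comp β)).comp β'
          = ((α'.comp α).comp (f i)).comp (β.comp β') := ContinuousMap.ext fun _ => rfl
      have e2 : f i = ((ContinuousMap.id Y).comp (f i)).comp (ContinuousMap.id X) :=
        ContinuousMap.ext fun _ => rfl
      have h2 : (f i).Homotopic ((α'.comp ((α.comp (f i)).comp β)).comp β') := by
        rw [e, e2]
        exact ContinuousMap.Homotopic.comp (ContinuousMap.Homotopic.comp hα2.symm (ContinuousMap.Homotopic.refl (f i))) hβ1.symm
      exact h2.trans h1
    calc homDist f = homDist (fun i => (α'.comp (f' i)).comp β') := homDist_congr _ _ hfg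
      _ ≤ homDist f' := homDist_comp_le α' β' f'
  · calc homDist f' = homDist (fun i => (α.comp (f i)).comp β) :=
          (homDist_congr _ _ h).symm
      _ ≤ homDist f := homDist_comp_le α β f
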